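/- Let F_d be the free group of rank d with free generating set Y, and let G be a non-abelian finitely generated group with finite palindromic width m = pw(G, X) with respect to a finite generating set X. Then there exists c ∈ G (possibly c = 1) such that every element of the subgroup F_d' ≀ G of the restricted regular wreath product F_d ≀ G — namely the subgroup consisting of all pairs (f, a) where a ∈ G and f : G → F_d is a finitely supported function taking values in the derived subgroup [F_d, F_d] — is a product of at most m + 1 palindromes with respect to the generating set of F_d ≀ G consisting of the canonical copies of X ∪ {c} and of Y. -/

import Mathlib

open Function

section WreathDefs

variable (G A : Type*) [Group G] [Group A]

/-- The subgroup of finitely supported functions `A → G` (pointwise operations). -/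
def restrictedBase : Subgroup (A → G) where
  carrier := {f | (Function.mulSupport f).Finite}
  one_mem' := by simp [Function.mulSupport_one]
  mul_mem' := fun hf hg => (hf.union hg).subset (Function.mulSupport_mul _ _)
  inv_mem' := fun hf => by simpa [Function.mulSupport_inv] using hf

variable {G A}

lemma shift_mem (a : A) (f : restrictedBase G A) :
    (fun x => (f : A → G) (a * x)) ∈ restrictedBase G A := by
  have h : Function.mulSupport (fun x => (f : A → G) (a * x)) =
      (fun x : A => a * x) ⁻¹' Function.mulSupport (f : A → G) :=
    Function.mulSupport_comp_eq_preimage _ _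
  show (Function.mulSupport _).Finite
  rw [h]
  exact f.2.preimage (mul_right_injective a).injOn

/-- The translation automorphism of the restricted base, `(a • f) x = f (a⁻¹ * x)`. -/
noncomputable def shiftEquiv (a : A) : restrictedBase G A ≃* restrictedBase G A where
  toFun f := ⟨fun x => (f : A → G) (a⁻¹ * x), shift_mem a⁻¹ f⟩
  invFun f := ⟨fun x => (f : A → G) (a * x), shift_mem a f⟩
  left_inv f := by ext x; simp
  right_inv f := by ext x; simp
  map_mul' f g := by ext x; simp

variable (G A)

/-- The translation action of `A` on finitely supported functions `A → G`. -/
noncomputable def wreathAction : A →* MulAut (restrictedBase G A) where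
  toFun a := shiftEquiv a
  map_one' := by ext f x; simp [shiftEquiv]
  map_mul' a b := by ext f x; simp [shiftEquiv, mul_assoc]

/-- The restricted regular wreath product `G ≀ A`. -/
noncomputable abbrev Wreath := restrictedBase G A ⋊[wreathAction G A] A

variable {G A}

/-- The finitely supported function equal to `g` at `1` and trivial elsewhere. -/
noncomputable def atOne (g : G) : restrictedBase G A :=
  letI := Classical.decEq A
  ⟨fun x => if x = 1 then g else 1, by
    apply Set.Finite.subset (Set.finite_singleton (1 : A))
    intro x hx
    simp only [Function.mem_mulSupport] at hx
    by_contra hx1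
    exact hx (if_neg (by simpa using hx1))⟩

/-- The natural generating set of `G ≀ A` built from generating sets of the factors. -/
noncomputable def wreathGens (XB : Set G) (XA : Set A) : Set (Wreath G A) :=
  ((fun g => SemidirectProduct.inl (atOne g)) '' XB) ∪ (SemidirectProduct.inr '' XA)

end WreathDefs

section Palindromes

variable {W : Type*} [Group W]

/-- `g` is a palindrome with respect to `S`: it is the product of a word over `S`
(entries in `S ∪ S⁻¹`) which reads the same forwards and backwards. -/
def IsPalindrome (S : Set W) (g : W) : Prop :=
  ∃ l : List W, (∀ x ∈ l, x ∈ S ∪ S⁻¹) ∧ l.reverse = l ∧ l.prod = g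

/-- `g` is a product of at most `n` palindromes with respect to `S`. -/
def ProdOfPal (S : Set W) (n : ℕ) (g : W) : Prop :=
  ∃ l : List W, l.length ≤ n ∧ (∀ p ∈ l, IsPalindrome S p) ∧ l.prod = g

/-- The palindromic width of a group with respect to `S` (`⊤` if infinite). -/
noncomputable def palWidth (S : Set W) : ℕ∞ :=
  sInf {n : ℕ∞ | ∃ m : ℕ, n = (m : ℕ∞) ∧ ∀ g : W, ProdOfPal S m g}

/-- The word length of `g` with respect to `S`. -/
noncomputable def wordLength (S : Set W) (g : W) : ℕ :=
  sInf {n : ℕ | ∃ l : List W, l.length = n ∧ (∀ x ∈ l, x ∈ S ∪ S⁻¹) ∧ l.prod = g}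

end Palindromes

section DPairCalc

variable {W : Type*} [Group W] {S : Set W} {u v u' v' : W}

/-- A pair `(u, v)` such that `u` is the product of a word over `S ∪ S⁻¹` whose
reverse has product `v`. -/
def DPair (S : Set W) (u v : W) : Prop :=
  ∃ D : List W, (∀ s ∈ D, s ∈ S ∪ S⁻¹) ∧ D.prod = u ∧ D.reverse.prod = v

namespace DPair

theorem one : DPair S 1 1 := ⟨[], by simp, rfl, rfl⟩

theorem atom (hu : u ∈ S ∪ S⁻¹) : DPair S u u :=
  ⟨[u], by simpa using hu, by simp, by simp⟩

theorem of_eq (h : DPair S u v) (hu : u = u') (hv : v = v') : DPair S u' v' :=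
  hu ▸ hv ▸ h

theorem mul (h : DPair S u v) (h' : DPair S u' v') : DPair S (u * u') (v' * v) := by
  obtain ⟨D, hD, hp, hr⟩ := h
  obtain ⟨D', hD', hp', hr'⟩ := h'
  refine ⟨D ++ D', ?_, ?_, ?_⟩
  · intro s hs
    rcases List.mem_append.mp hs with h | h
    exacts [hD s h, hD' s h]
  · rw [List.prod_append, hp, hp']
  · rw [List.reverse_append, List.prod_append, hr, hr']

theorem inv (h : DPair S u v) : DPair S u⁻¹ v⁻¹ := by
  obtain ⟨D, hD, hp, hr⟩ := h
  refine ⟨(D.map fun x => x⁻¹).reverse, ?_, ?_, ?_⟩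
  · intro s hs
    rw [List.mem_reverse, List.mem_map] at hs
    obtain ⟨t, ht, rfl⟩ := hs
    rcases hD t ht with h | h
    · exact Or.inr (by simpa using h)
    · exact Or.inl (by simpa using h)
  · rw [← List.prod_inv_reverse, hp]
  · rw [List.reverse_reverse]
    have h2 := List.prod_inv_reverse D.reverse
    rw [List.map_reverse, List.reverse_reverse] at h2
    rw [← h2, hr]

theorem isPalindrome (h : DPair S u v) : IsPalindrome S (u * v) := by
  obtain ⟨D, hD, hp, hr⟩ := h
  refine ⟨D ++ D.reverse, ?_, ?_, ?_⟩
  · intro s hs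
    rcases List.mem_append.mp hs with h | h
    exacts [hD s h, hD s (List.mem_reverse.mp h)]
  · rw [List.reverse_append, List.reverse_reverse]
  · rw [List.prod_append, hp, hr]

end DPair

end DPairCalc

section BaseLemmas

variable {Γ A : Type*} [Group Γ] [Group A]

lemma atOne_apply_one (g : Γ) : ((atOne g : restrictedBase Γ A) : A → Γ) 1 = g := by
  letI := Classical.decEq A
  show (if (1 : A) = 1 then g else 1) = g
  simp

lemma atOne_apply_ne (g : Γ) {x : A} (hx : x ≠ 1) :
    ((atOne g : restrictedBase Γ A) : A → Γ) x = 1 := by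
  letI := Classical.decEq A
  show (if x = 1 then g else 1) = 1
  simp [hx]

lemma atOne_mul (g h : Γ) : (atOne (g * h) : restrictedBase Γ A) = atOne g * atOne h := by
  apply Subtype.ext
  funext x
  by_cases hx : x = 1
  · subst hx
    simp [atOne_apply_one]
  · simp [atOne_apply_ne _ hx]

lemma atOne_one : (atOne 1 : restrictedBase Γ A) = 1 := by
  apply Subtype.ext
  funext x
  by_cases hx : x = 1
  · subst hx; simp [atOne_apply_one]
  · simp [atOne_apply_ne _ hx]

lemma atOne_inv (g : Γ) : (atOne g⁻¹ : restrictedBase Γ A) = (atOne g)⁻¹ := by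
  rw [eq_inv_iff_mul_eq_one, ← atOne_mul, inv_mul_cancel, atOne_one]

lemma wreathAction_apply (a : A) (f : restrictedBase Γ A) (x : A) :
    ((wreathAction Γ A a f : restrictedBase Γ A) : A → Γ) x = (f : A → Γ) (a⁻¹ * x) := rfl

lemma shifted_atOne_apply_self (a : A) (g : Γ) :
    ((wreathAction Γ A a (atOne g) : restrictedBase Γ A) : A → Γ) a = g := by
  rw [wreathAction_apply, inv_mul_cancel, atOne_apply_one]

lemma shifted_atOne_apply_ne (a : A) (g : Γ) {x : A} (hx : x ≠ a) :
    ((wreathAction Γ A a (atOne g) : restrictedBase Γ A) : A → Γ) x = 1 := by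
  rw [wreathAction_apply, atOne_apply_ne]
  intro h
  exact hx (inv_mul_eq_one.mp h).symm

open scoped commutatorElement in
/-- The key computation: three "clusters" produce a commutator at the identity position
while cancelling at position `n`. -/
lemma cluster_comm {n : A} (hn : n ≠ 1) (a b : Γ) :
    (atOne a * wreathAction Γ A n (atOne a⁻¹)) *
      (atOne b * wreathAction Γ A n (atOne b⁻¹)) *
      (atOne (a⁻¹ * b⁻¹) * wreathAction Γ A n (atOne (a⁻¹ * b⁻¹)⁻¹))
      = atOne ⁅a, b⁆ := by
  apply Subtype.ext
  funext x
  simp only [Subgroup.coe_mul, Pi.mul_apply]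
  by_cases h1 : x = 1
  · subst h1
    rw [shifted_atOne_apply_ne _ _ (fun h => hn h.symm),
      shifted_atOne_apply_ne _ _ (fun h => hn h.symm),
      shifted_atOne_apply_ne _ _ (fun h => hn h.symm),
      atOne_apply_one, atOne_apply_one, atOne_apply_one, atOne_apply_one]
    group
  · by_cases h2 : x = n
    · subst h2
      rw [shifted_atOne_apply_self, shifted_atOne_apply_self, shifted_atOne_apply_self,
        atOne_apply_ne _ h1, atOne_apply_ne _ h1, atOne_apply_ne _ h1, atOne_apply_ne _ h1]
      group
    · rw [shifted_atOne_apply_ne _ _ h2, shifted_atOne_apply_ne _ _ h2,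
        shifted_atOne_apply_ne _ _ h2,
        atOne_apply_ne _ h1, atOne_apply_ne _ h1, atOne_apply_ne _ h1, atOne_apply_ne _ h1]
      simp

end BaseLemmas

/-- Let `F_d` be the free group of rank `d` and `G` a non-abelian finitely
generated group with palindromic width `m = pw(G, X)` for a finite generating set `X`.
Then there is `c ∈ G` (possibly `c = 1`) such that every element of `F_d' ≀ G` — i.e.
every element `w` of `F_d ≀ G` whose base component takes values in `[F_d, F_d]` — is a
product of at most `m + 1` palindromes with respect to the canonical copies of `X ∪ {c}`
and of the free generating set of `F_d`. -/
theorem derived_free_wreath_palindromes {G : Type*} [Group G] (d : ℕ)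
    (X : Finset G) (hX : Subgroup.closure (X : Set G) = ⊤)
    (hna : ∃ a b : G, a * b ≠ b * a)
    (m : ℕ) (hm : palWidth (X : Set G) = (m : ℕ∞)) :
    ∃ c : G, ∀ w : Wreath (FreeGroup (Fin d)) G,
      (∀ a : G, (w.left : G → FreeGroup (Fin d)) a ∈ commutator (FreeGroup (Fin d))) →
      ProdOfPal
        (wreathGens (Set.range (FreeGroup.of : Fin d → FreeGroup (Fin d)))
          ((X : Set G) ∪ {c}))
        (m + 1) w := by
  classical
  -- Step 1: find a non-commuting pair of generators in `X`.
  have hxy : ∃ x ∈ (X : Set G), ∃ y ∈ (X : Set G), x * y ≠ y * x := by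
    by_contra hc
    push_neg at hc
    obtain ⟨a, b, hab⟩ := hna
    apply hab
    exact Subgroup.closure_induction₂ (p := fun p q _ _ => Commute p q)
      (fun u v' hu hv => hc u hu v' hv)
      (fun u _ => Commute.one_left u) (fun u _ => Commute.one_right u)
      (fun u v' z _ _ _ h1 h2 => h1.mul_left h2)
      (fun v' z u _ _ _ h1 h2 => h1.mul_right h2)
      (fun u v' _ _ h => h.inv_left) (fun u v' _ _ h => h.inv_right)
      (hX ▸ Subgroup.mem_top a) (hX ▸ Subgroup.mem_top b)
  obtain ⟨x, hxX, y, hyX, hxy⟩ := hxy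
  refine ⟨x * y, ?_⟩
  intro w hw
  obtain ⟨S, hS⟩ : ∃ S : Set (Wreath (FreeGroup (Fin d)) G),
      S = wreathGens (Set.range (FreeGroup.of : Fin d → FreeGroup (Fin d)))
        ((X : Set G) ∪ {x * y}) := ⟨_, rfl⟩
  rw [← hS]
  -- membership of the atoms
  have hmemB : ∀ i : Fin d, SemidirectProduct.inl (atOne (FreeGroup.of i)) ∈ S := by
    intro i
    rw [hS]
    exact Or.inl ⟨FreeGroup.of i, ⟨i, rfl⟩, rfl⟩
  have hmemA : ∀ g : G, g ∈ (X : Set G) ∪ {x * y} → SemidirectProduct.inr g ∈ S := by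
    intro g hg
    rw [hS]
    exact Or.inr ⟨g, hg, rfl⟩
  -- the key non-trivial element whose defining word reverses to a trivial word
  obtain ⟨n, hn⟩ : ∃ n : G, n = x⁻¹ * (y⁻¹ * (x * y)) := ⟨_, rfl⟩
  have hn1 : n ≠ 1 := by
    rw [hn]
    intro h
    have h1 : x = y⁻¹ * (x * y) := inv_mul_eq_one.mp h
    exact hxy (eq_inv_mul_iff_mul_eq.mp h1).symm
  have Dn : DPair S (SemidirectProduct.inr n) 1 := by
    refine ⟨[SemidirectProduct.inr x⁻¹, SemidirectProduct.inr y⁻¹,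
      SemidirectProduct.inr (x * y)], ?_, ?_, ?_⟩
    · intro s hs
      simp only [List.mem_cons, List.not_mem_nil, or_false] at hs
      rcases hs with rfl | rfl | rfl
      · refine Or.inr (Set.mem_inv.mpr ?_)
        rw [map_inv, inv_inv]
        exact hmemA x (Or.inl hxX)
      · refine Or.inr (Set.mem_inv.mpr ?_)
        rw [map_inv, inv_inv]
        exact hmemA y (Or.inl hyX)
      · exact Or.inl (hmemA (x * y) (Or.inr rfl))
    · simp only [List.prod_cons, List.prod_nil, mul_one, ← map_mul]
      rw [hn]
    · show (List.prod [SemidirectProduct.inr (x * y), SemidirectProduct.inr y⁻¹,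
        SemidirectProduct.inr x⁻¹] : Wreath (FreeGroup (Fin d)) G) = 1
      simp only [List.prod_cons, List.prod_nil, mul_one, ← map_mul]
      rw [show (x * y) * (y⁻¹ * x⁻¹) = 1 by group, map_one]
  -- words for elements of the free group, together with their reverse values
  have freePair : ∀ z : FreeGroup (Fin d), ∃ z' : FreeGroup (Fin d),
      DPair S (SemidirectProduct.inl (atOne z)) (SemidirectProduct.inl (atOne z')) := by
    intro z
    induction z using FreeGroup.induction_on with
    | C1 => exact ⟨1, by rw [atOne_one, map_one]; exact DPair.one⟩
    | of i => exact ⟨FreeGroup.of i, DPair.atom (Or.inl (hmemB i))⟩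
    | inv_of i ih =>
        obtain ⟨z', hz⟩ := ih
        exact ⟨z'⁻¹, by simpa only [atOne_inv, map_inv] using hz.inv⟩
    | mul a b ha hb =>
        obtain ⟨a', hA⟩ := ha
        obtain ⟨b', hB⟩ := hb
        exact ⟨b' * a', by simpa only [atOne_mul, map_mul] using hA.mul hB⟩
  -- a "cluster" word: places z at position 1 and z⁻¹ at position n, with
  -- reversed word having trivial product
  have cstPair : ∀ z : FreeGroup (Fin d),
      DPair S (SemidirectProduct.inl
        (atOne z * wreathAction (FreeGroup (Fin d)) G n (atOne z⁻¹))) 1 := by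
    intro z
    obtain ⟨z', hz⟩ := freePair z
    have h3 : DPair S (SemidirectProduct.inl (atOne z⁻¹))
        (SemidirectProduct.inl (atOne z'⁻¹)) := by
      simpa only [atOne_inv, map_inv] using hz.inv
    have hcomb := ((hz.mul Dn).mul h3).mul Dn.inv
    refine hcomb.of_eq ?_ ?_
    · conv_rhs => rw [map_mul, SemidirectProduct.inl_aut]
      rw [map_inv]
      group
    · rw [inv_one, one_mul, one_mul, ← map_mul, ← atOne_mul, inv_mul_cancel, atOne_one, map_one]
  -- every commutator value can be carried by a palindrome-half with trivial reverse
  have commPair : ∀ v : FreeGroup (Fin d), v ∈ commutator (FreeGroup (Fin d)) →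
      DPair S (SemidirectProduct.inl (atOne v)) 1 := by
    intro v hv
    rw [commutator_eq_closure] at hv
    induction hv using Subgroup.closure_induction with
    | mem g hg =>
        obtain ⟨a, b, rfl⟩ := hg
        have hcomb := ((cstPair a).mul (cstPair b)).mul (cstPair (a⁻¹ * b⁻¹))
        refine hcomb.of_eq ?_ (by simp)
        rw [← map_mul, ← map_mul, cluster_comm hn1 a b]
    | one => rw [atOne_one, map_one]; exact DPair.one
    | mul a b ha hb iha ihb =>
        exact (iha.mul ihb).of_eq (by rw [← map_mul, ← atOne_mul]) (one_mul 1)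
    | inv a ha iha =>
        exact iha.inv.of_eq (by rw [← map_inv, ← atOne_inv]) inv_one
  -- words for elements of G (with some reverse value)
  have grpPair : ∀ h : G, ∃ h' : G,
      DPair S (SemidirectProduct.inr h) (SemidirectProduct.inr h') := by
    intro h
    have hh : h ∈ Subgroup.closure (X : Set G) := hX ▸ Subgroup.mem_top h
    induction hh using Subgroup.closure_induction with
    | mem g hg => exact ⟨g, DPair.atom (Or.inl (hmemA g (Or.inl hg)))⟩
    | one => exact ⟨1, by rw [map_one]; exact DPair.one⟩
    | mul a b ha hb iha ihb =>
        obtain ⟨a', hA⟩ := iha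
        obtain ⟨b', hB⟩ := ihb
        exact ⟨b' * a', by simpa only [map_mul] using hA.mul hB⟩
    | inv a ha iha =>
        obtain ⟨a', hA⟩ := iha
        exact ⟨a'⁻¹, by simpa only [map_inv] using hA.inv⟩
  -- commutator values at arbitrary positions
  have pointPair : ∀ (h : G) (v : FreeGroup (Fin d)), v ∈ commutator (FreeGroup (Fin d)) →
      DPair S (SemidirectProduct.inl
        (wreathAction (FreeGroup (Fin d)) G h (atOne v))) 1 := by
    intro h v hv
    obtain ⟨h', hh⟩ := grpPair h
    have hinv : DPair S (SemidirectProduct.inr h⁻¹) (SemidirectProduct.inr h'⁻¹) := by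
      simpa only [map_inv] using hh.inv
    have hcomb := (hh.mul (commPair v hv)).mul hinv
    refine hcomb.of_eq ?_ ?_
    · rw [SemidirectProduct.inl_aut]
    · rw [one_mul, ← map_mul, inv_mul_cancel, map_one]
  -- main induction over the support
  have mainInd : ∀ (s : Finset G) (f : restrictedBase (FreeGroup (Fin d)) G),
      (∀ a : G, (f : G → FreeGroup (Fin d)) a ∈ commutator (FreeGroup (Fin d))) →
      (∀ a : G, a ∉ s → (f : G → FreeGroup (Fin d)) a = 1) →
      DPair S (SemidirectProduct.inl f) 1 := by
    intro s
    induction s using Finset.induction_on with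
    | empty =>
        intro f hf h0
        have hf1 : f = 1 := by
          apply Subtype.ext
          funext a
          simpa using h0 a (Finset.notMem_empty a)
        rw [hf1, map_one]
        exact DPair.one
    | @insert a s hni ih =>
        intro f hf h0
        have key1 : DPair S (SemidirectProduct.inl
            (wreathAction (FreeGroup (Fin d)) G a
              (atOne ((f : G → FreeGroup (Fin d)) a)))) 1 := pointPair a _ (hf a)
        have hcoe : ∀ b : G,
            (((wreathAction (FreeGroup (Fin d)) G a
                (atOne ((f : G → FreeGroup (Fin d)) a)))⁻¹ * f :
              restrictedBase (FreeGroup (Fin d)) G) : G → FreeGroup (Fin d)) b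
            = (((wreathAction (FreeGroup (Fin d)) G a
                (atOne ((f : G → FreeGroup (Fin d)) a)) :
                  restrictedBase (FreeGroup (Fin d)) G) : G → FreeGroup (Fin d)) b)⁻¹ *
              (f : G → FreeGroup (Fin d)) b := fun b => rfl
        have hf' : ∀ b : G,
            (((wreathAction (FreeGroup (Fin d)) G a
                (atOne ((f : G → FreeGroup (Fin d)) a)))⁻¹ * f :
              restrictedBase (FreeGroup (Fin d)) G) : G → FreeGroup (Fin d)) b
              ∈ commutator (FreeGroup (Fin d)) := by
          intro b
          rw [hcoe b]
          refine mul_mem (inv_mem ?_) (hf b)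
          by_cases hb : b = a
          · subst hb
            rw [shifted_atOne_apply_self]
            exact hf b
          · rw [shifted_atOne_apply_ne _ _ hb]
            exact one_mem _
        have hsupp : ∀ b : G, b ∉ s →
            (((wreathAction (FreeGroup (Fin d)) G a
                (atOne ((f : G → FreeGroup (Fin d)) a)))⁻¹ * f :
              restrictedBase (FreeGroup (Fin d)) G) : G → FreeGroup (Fin d)) b = 1 := by
          intro b hb
          rw [hcoe b]
          by_cases hba : b = a
          · subst hba
            rw [shifted_atOne_apply_self, inv_mul_cancel]
          · rw [shifted_atOne_apply_ne _ _ hba, inv_one, one_mul]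
            exact h0 b (by simp [hba, hb])
        have key2 := ih _ hf' hsupp
        refine (key1.mul key2).of_eq ?_ (one_mul 1)
        rw [← map_mul, mul_inv_cancel_left]
  -- the base part of `w` is a single palindrome
  have hfin : (Function.mulSupport ((w.left : G → FreeGroup (Fin d)))).Finite := w.left.2
  have fPal : IsPalindrome S (SemidirectProduct.inl w.left) := by
    have hmain := mainInd hfin.toFinset w.left hw ?_
    · simpa using hmain.isPalindrome
    · intro a ha
      rw [Set.Finite.mem_toFinset] at ha
      by_contra hne
      exact ha (Function.mem_mulSupport.mpr hne)
  -- extract the palindromic width bound for G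
  have hEx : ∃ k : ℕ, ∀ g : G, ProdOfPal (X : Set G) k g := by
    by_contra hc
    push_neg at hc
    have hT : {nn : ℕ∞ | ∃ k : ℕ, nn = (k : ℕ∞) ∧ ∀ g : G, ProdOfPal (X : Set G) k g} = ∅ := by
      ext nn
      simp only [Set.mem_setOf_eq, Set.mem_empty_iff_false, iff_false, not_exists]
      rintro k ⟨rfl, hk⟩
      obtain ⟨g, hg⟩ := hc k
      exact hg (hk g)
    rw [palWidth, hT, sInf_empty] at hm
    exact (ENat.top_ne_coe m) hm
  have hQm : ∀ g : G, ProdOfPal (X : Set G) m g := by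
    have hk0 := Nat.find_spec hEx
    have hle : ((Nat.find hEx : ℕ) : ℕ∞) ≤ (m : ℕ∞) := by
      rw [← hm, palWidth]
      apply le_sInf
      rintro nn ⟨k, rfl, hk⟩
      exact_mod_cast Nat.find_min' hEx hk
    have hle' : Nat.find hEx ≤ m := by exact_mod_cast hle
    intro g
    obtain ⟨l, h1, h2, h3⟩ := hk0 g
    exact ⟨l, h1.trans hle', h2, h3⟩
  -- palindromes in G give palindromes in the wreath product
  have inrPal : ∀ q : G, IsPalindrome (X : Set G) q →
      IsPalindrome S (SemidirectProduct.inr q) := by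
    rintro q ⟨l, hl, hrev, hprod⟩
    refine ⟨l.map SemidirectProduct.inr, ?_, ?_, ?_⟩
    · intro u hu
      rw [List.mem_map] at hu
      obtain ⟨t, ht, rfl⟩ := hu
      rcases hl t ht with h | h
      · exact Or.inl (hmemA t (Or.inl h))
      · refine Or.inr (Set.mem_inv.mpr ?_)
        rw [← map_inv]
        exact hmemA t⁻¹ (Or.inl (Set.mem_inv.mp h))
    · rw [← List.map_reverse, hrev]
    · rw [← map_list_prod, hprod]
  -- assemble
  obtain ⟨L, hLlen, hLpal, hLprod⟩ := hQm w.right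
  refine ⟨SemidirectProduct.inl w.left :: L.map SemidirectProduct.inr, ?_, ?_, ?_⟩
  · simp only [List.length_cons, List.length_map]
    omega
  · intro p hp
    rcases List.mem_cons.mp hp with rfl | hp
    · exact fPal
    · rw [List.mem_map] at hp
      obtain ⟨q, hq, rfl⟩ := hp
      exact inrPal q (hLpal q hq)
  · rw [List.prod_cons, ← map_list_prod, hLprod, SemidirectProduct.inl_left_mul_inr_right]
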